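/- Every left quotient of a product of atoms is either a suffix product of it or the empty set. Concretely: if I = α₁·α₂⋯αₙ where each α_i is either {c, ε} for a letter c or B* for B ⊆ Σ, then for every word x, the language I/x is either ∅ or equal to α_j·α_{j+1}⋯αₙ for some j (possibly with a leading partially consumed atom replaced appropriately: for star atoms the atom stays, for letter atoms it becomes ε, so the result is exactly a suffix product α_j⋯αₙ). -/

import Mathlib

/-- An atom is either `(a + ε)` for a letter `a`, or `B*` for a set of letters `B`. -/
inductive Atom (α : Type*) where
  | letter (a : α) : Atom α
  | star (B : Set α) : Atom α

/-- The language denoted by an atom. -/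
def Atom.lang {α : Type*} : Atom α → Set (List α)
  | .letter a => {[a], []}
  | .star B => {w | ∀ c ∈ w, c ∈ B}

/-- The language of a product of atoms (empty product is `{ε}`). -/
def prodLang {α : Type*} : List (Atom α) → Set (List α)
  | [] => {[]}
  | A :: I => Set.image2 (· ++ ·) A.lang (prodLang I)

def quot {α : Type*} (L : Set (List α)) (u : List α) : Set (List α) :=
  {w | u ++ w ∈ L}

lemma nil_mem_lang {α : Type*} (A : Atom α) : ([] : List α) ∈ A.lang := by
  cases A <;> simp [Atom.lang]

lemma prodLang_drop_subset {α : Type*} (I : List (Atom α)) (j : ℕ) :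
    prodLang (I.drop j) ⊆ prodLang I := by
  induction I generalizing j with
  | nil => simp
  | cons A I ih =>
    cases j with
    | zero => exact subset_rfl
    | succ j =>
      intro w hw
      exact ⟨[], nil_mem_lang A, w, ih j hw, rfl⟩

lemma key {α : Type*} (a : α) (I : List (Atom α)) :
    quot (prodLang I) [a] = ∅ ∨
      ∃ j ≤ I.length, quot (prodLang I) [a] = prodLang (I.drop j) := by
  induction I with
  | nil =>
    left; ext w; simp [quot, prodLang]
  | cons A I ih =>
    have hsub : quot (prodLang I) [a] ⊆ prodLang I := by
      rcases ih with h | ⟨j, _, h⟩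
      · simp [h]
      · rw [h]; exact prodLang_drop_subset I j
    cases A with
    | letter b =>
      by_cases hab : a = b
      · right
        refine ⟨1, by simp, ?_⟩
        ext w
        constructor
        · rintro ⟨u, hu, v, hv, huv⟩
          rcases hu with hu | hu
          · subst hu
            simp only [Set.mem_setOf_eq] at huv
            have : v = w := by
              have : b :: v = a :: w := huv
              simpa [hab] using this
            subst this; exact hv
          · subst hu
            simp only [List.nil_append] at huv
            subst huv
            exact hsub hv
        · intro hw
          exact ⟨[b], Or.inl rfl, w, hw, by simp [hab]⟩
      · have heq : quot (prodLang (Atom.letter b :: I)) [a] = quot (prodLang I) [a] := by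
          ext w
          constructor
          · rintro ⟨u, hu, v, hv, huv⟩
            rcases hu with hu | hu
            · subst hu
              exact absurd (List.head_eq_of_cons_eq huv).symm hab
            · subst hu
              simp only [List.nil_append] at huv
              subst huv; exact hv
          · intro hw
            exact ⟨[], Or.inr rfl, a :: w, hw, rfl⟩
        rcases ih with h | ⟨j, hj, h⟩
        · left; rw [heq, h]
        · right
          exact ⟨j + 1, by simpa using hj, by rw [heq, h]; rfl⟩
    | star B =>
      by_cases haB : a ∈ B
      · right
        refine ⟨0, Nat.zero_le _, ?_⟩
        ext w
        constructor
        · rintro ⟨u, hu, v, hv, huv⟩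
          cases u with
          | nil =>
            simp only [List.nil_append] at huv
            subst huv
            exact prodLang_drop_subset (Atom.star B :: I) 1 (hsub hv)
          | cons c u' =>
            have hc : c = a := (List.head_eq_of_cons_eq huv)
            have hw' : u' ++ v = w := (List.tail_eq_of_cons_eq huv)
            exact ⟨u', fun d hd => hu d (List.mem_cons_of_mem c hd), v, hv, hw'⟩
        · rintro ⟨u, hu, v, hv, huv⟩
          refine ⟨a :: u, ?_, v, hv, by simp [huv]⟩
          intro c hc
          rcases List.mem_cons.mp hc with h | h
          · subst h; exact haB
          · exact hu c h
      · have heq : quot (prodLang (Atom.star B :: I)) [a] = quot (prodLang I) [a] := by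
          ext w
          constructor
          · rintro ⟨u, hu, v, hv, huv⟩
            cases u with
            | nil =>
              simp only [List.nil_append] at huv
              subst huv; exact hv
            | cons c u' =>
              have hc : c = a := (List.head_eq_of_cons_eq huv)
              exact absurd (hc ▸ hu c List.mem_cons_self) haB
          · intro hw
            exact ⟨[], fun c hc => absurd hc List.not_mem_nil, a :: w, hw, rfl⟩
        rcases ih with h | ⟨j, hj, h⟩
        · left; rw [heq, h]
        · right
          exact ⟨j + 1, by simpa using hj, by rw [heq, h]; rfl⟩

/-- Every quotient of a product of atoms is `∅` or a suffix product. -/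
theorem quot_prodLang_suffix {α : Type*} (I : List (Atom α)) (x : List α) :
    quot (prodLang I) x = ∅ ∨
      ∃ j : ℕ, j ≤ I.length ∧ quot (prodLang I) x = prodLang (I.drop j) := by
  induction x generalizing I with
  | nil =>
    right
    refine ⟨0, Nat.zero_le _, ?_⟩
    ext w; simp [quot]
  | cons a x ih =>
    have hstep : quot (prodLang I) (a :: x) = quot (quot (prodLang I) [a]) x := by
      ext w; simp [quot]
    rcases key a I with h | ⟨j, hj, h⟩
    · left
      rw [hstep, h]
      ext w; simp [quot]
    · rw [hstep, h]
      rcases ih (I.drop j) with h' | ⟨j', hj', h'⟩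
      · left; exact h'
      · right
        refine ⟨j + j', ?_, ?_⟩
        · simp only [List.length_drop] at hj'
          omega
        · rw [h', List.drop_drop, Nat.add_comm]
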